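/- The negative Tsallis entropy ω(u) := -(1/((1-p)p)) ∑_{a} u(a)^p with entropic index p ∈ (0,1) is strongly convex with modulus 1 with respect to the ℓ1-norm on the relative interior of the probability simplex; equivalently, for all u in the relative interior of the simplex and all x ∈ ℝ^n, x^T ∇²ω(u) x ≥ ‖x‖₁². -/
import Mathlib


/-- Strong convexity (modulus 1 w.r.t. ℓ1) of negative Tsallis entropy on the
relative interior of the simplex: the Hessian quadratic form dominates ‖x‖₁². -/
theorem tsallis_hessian_strong_convexity
    (n : ℕ) (hn : 1 ≤ n) (p : ℝ) (hp0 : 0 < p) (hp1 : p < 1)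
    (u : Fin n → ℝ) (hu_pos : ∀ i, 0 < u i) (hu_sum : ∑ i, u i = 1)
    (x : Fin n → ℝ) :
    (∑ i, |x i|) ^ 2 ≤ ∑ i, (x i) ^ 2 * u i ^ (p - 2) := by
  set f : Fin n → ℝ := fun i => u i ^ ((2 - p) / 2) with hf
  set g : Fin n → ℝ := fun i => |x i| * u i ^ ((p - 2) / 2) with hg
  have hfg : ∀ i, f i * g i = |x i| := by
    intro i
    have := hu_pos i
    rw [hf, hg]
    simp only
    rw [mul_comm (|x i|), ← mul_assoc, ← Real.rpow_add this]
    have h0 : (2 - p) / 2 + (p - 2) / 2 = 0 := by ring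
    rw [h0, Real.rpow_zero, one_mul]
  have h1 : (∑ i, f i * g i) = ∑ i, |x i| := by
    exact Finset.sum_congr rfl fun i _ => hfg i
  have hf2 : ∀ i, f i ^ 2 = u i ^ (2 - p) := by
    intro i
    rw [hf]
    simp only
    rw [← Real.rpow_natCast (u i ^ ((2 - p) / 2)) 2, ← Real.rpow_mul (hu_pos i).le]
    norm_num
  have hg2 : ∀ i, g i ^ 2 = x i ^ 2 * u i ^ (p - 2) := by
    intro i
    rw [hg]
    simp only
    rw [mul_pow, sq_abs, ← Real.rpow_natCast (u i ^ ((p - 2) / 2)) 2,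
      ← Real.rpow_mul (hu_pos i).le]
    norm_num
  have hu_le : ∀ i, u i ≤ 1 := by
    intro i
    calc u i ≤ ∑ j, u j := Finset.single_le_sum (fun j _ => (hu_pos j).le) (Finset.mem_univ i)
    _ = 1 := hu_sum
  have hsum_le : ∑ i, u i ^ (2 - p) ≤ 1 := by
    calc ∑ i, u i ^ (2 - p) ≤ ∑ i, u i := by
          apply Finset.sum_le_sum
          intro i _
          calc u i ^ (2 - p) ≤ u i ^ (1 : ℝ) :=
                Real.rpow_le_rpow_of_exponent_ge (hu_pos i) (hu_le i) (by linarith)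
          _ = u i := Real.rpow_one _
    _ = 1 := hu_sum
  have hCS2 : (∑ i, |x i|) ^ 2 ≤ (∑ i, u i ^ (2 - p)) * ∑ i, x i ^ 2 * u i ^ (p - 2) := by
    have := Finset.sum_mul_sq_le_sq_mul_sq Finset.univ f g
    rw [h1] at this
    simpa [hf2, hg2] using this
  have hRHS : 0 ≤ ∑ i, x i ^ 2 * u i ^ (p - 2) :=
    Finset.sum_nonneg fun i _ => mul_nonneg (sq_nonneg _) (Real.rpow_nonneg (hu_pos i).le _)
  calc (∑ i, |x i|) ^ 2 ≤ (∑ i, u i ^ (2 - p)) * ∑ i, x i ^ 2 * u i ^ (p - 2) := hCS2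
  _ ≤ 1 * ∑ i, x i ^ 2 * u i ^ (p - 2) := by
        exact mul_le_mul_of_nonneg_right hsum_le hRHS
  _ = _ := one_mul _
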